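/- For N×N Hermitian matrices X₁,…,X_ℓ, setting Z = ∑ᵢ Xᵢ², for every positive integer D one has Tr(Z^D) ≤ ℓ^D · maxᵢ Tr(Xᵢ^{2D}). -/

import Mathlib

open Matrix

/-- Conjugation by a unitary commutes with powers (U on the left). -/
lemma myConjPow (n : ℕ) (U : Matrix.unitaryGroup (Fin n) ℂ) (A : Matrix (Fin n) (Fin n) ℂ) (m : ℕ) :
    ((U : Matrix (Fin n) (Fin n) ℂ) * A * star (U : Matrix (Fin n) (Fin n) ℂ)) ^ m
      = (U : Matrix (Fin n) (Fin n) ℂ) * A ^ m * star (U : Matrix (Fin n) (Fin n) ℂ) := by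
  induction m with
  | zero => simp [pow_zero, Unitary.mul_star_self_of_mem U.2]
  | succ k ih =>
      rw [pow_succ, pow_succ, ih]
      simp only [mul_assoc]
      rw [← mul_assoc (star (U : Matrix (Fin n) (Fin n) ℂ)) (U : Matrix (Fin n) (Fin n) ℂ),
        Matrix.UnitaryGroup.star_mul_self, one_mul]

/-- Conjugation by a unitary commutes with powers (star U on the left). -/
lemma myConjPow' (n : ℕ) (U : Matrix.unitaryGroup (Fin n) ℂ) (A : Matrix (Fin n) (Fin n) ℂ) (m : ℕ) :
    (star (U : Matrix (Fin n) (Fin n) ℂ) * A * (U : Matrix (Fin n) (Fin n) ℂ)) ^ m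
      = star (U : Matrix (Fin n) (Fin n) ℂ) * A ^ m * (U : Matrix (Fin n) (Fin n) ℂ) := by
  induction m with
  | zero => simp [pow_zero, Matrix.UnitaryGroup.star_mul_self]
  | succ k ih =>
      rw [pow_succ, pow_succ, ih]
      simp only [mul_assoc]
      rw [← mul_assoc (U : Matrix (Fin n) (Fin n) ℂ) (star (U : Matrix (Fin n) (Fin n) ℂ)),
        Unitary.mul_star_self_of_mem U.2, one_mul]

/-- Diagonal entry of U * diagonal(real) * U^*. -/
lemma diag_entry_re (n : ℕ) (U : Matrix (Fin n) (Fin n) ℂ) (d : Fin n → ℝ) (j : Fin n) :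
    (((U * diagonal (fun k => ((d k : ℂ))) * star U)) j j).re
      = ∑ k, d k * Complex.normSq (U j k) := by
  rw [Matrix.mul_apply, Complex.re_sum]
  congr 1; ext k
  rw [Matrix.mul_diagonal, Matrix.star_apply, mul_comm (U j k), mul_assoc,
    RCLike.star_def, Complex.mul_conj]
  simp [Complex.ofReal_mul]

/-- Diagonal entries of a power of a Hermitian matrix via its eigenvalues. -/
lemma pow_diag_entry (n : ℕ) (C : Matrix (Fin n) (Fin n) ℂ) (hC : C.IsHermitian) (m : ℕ)
    (j : Fin n) :
    ((C ^ m) j j).re = ∑ k, hC.eigenvalues k ^ m *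
      Complex.normSq ((hC.eigenvectorUnitary : Matrix (Fin n) (Fin n) ℂ) j k) := by
  set U := (hC.eigenvectorUnitary : Matrix (Fin n) (Fin n) ℂ) with hU
  have h : C ^ m = U * diagonal (fun k => ((hC.eigenvalues k : ℂ)) ^ m) * star U := by
    conv_lhs => rw [hC.spectral_theorem, Unitary.conjStarAlgAut_apply]
    rw [myConjPow, Matrix.diagonal_pow]
    rfl
  have h2 : (fun k => ((hC.eigenvalues k : ℂ)) ^ m)
      = fun k => (((hC.eigenvalues k ^ m : ℝ)) : ℂ) := by
    ext k; push_cast; ring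
  rw [h, h2, diag_entry_re]

/-- Rows of a unitary matrix are unit vectors. -/
lemma unitary_row_sum (n : ℕ) (U : Matrix.unitaryGroup (Fin n) ℂ) (j : Fin n) :
    ∑ k, Complex.normSq ((U : Matrix (Fin n) (Fin n) ℂ) j k) = 1 := by
  have h : ((U : Matrix (Fin n) (Fin n) ℂ) * star (U : Matrix (Fin n) (Fin n) ℂ)) j j = 1 := by
    rw [Unitary.mul_star_self_of_mem U.2]; simp [Matrix.one_apply]
  rw [Matrix.mul_apply] at h
  have h2 : ∀ k, (U : Matrix (Fin n) (Fin n) ℂ) j k *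
      star (U : Matrix (Fin n) (Fin n) ℂ) k j
      = ((Complex.normSq ((U : Matrix (Fin n) (Fin n) ℂ) j k) : ℂ)) := by
    intro k
    rw [Matrix.star_apply, RCLike.star_def, Complex.mul_conj]
  rw [Finset.sum_congr rfl (fun k _ => h2 k)] at h
  have := congrArg Complex.re h
  rw [Complex.re_sum] at this
  simpa using this

/-- Jensen: for Hermitian C, ((C²)ⱼⱼ)^D ≤ (C^{2D})ⱼⱼ. -/
lemma jensen_diag (n : ℕ) (C : Matrix (Fin n) (Fin n) ℂ) (hC : C.IsHermitian) (D : ℕ)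
    (j : Fin n) :
    (((C ^ 2) j j).re) ^ D ≤ ((C ^ (2 * D)) j j).re := by
  rw [pow_diag_entry n C hC 2 j, pow_diag_entry n C hC (2 * D) j]
  set U := (hC.eigenvectorUnitary : Matrix (Fin n) (Fin n) ℂ)
  set w : Fin n → ℝ := fun k => Complex.normSq (U j k) with hw
  set z : Fin n → ℝ := fun k => hC.eigenvalues k ^ 2 with hz
  have key := Real.pow_arith_mean_le_arith_mean_pow Finset.univ w z
    (fun k _ => Complex.normSq_nonneg _) (unitary_row_sum n hC.eigenvectorUnitary j)
    (fun k _ => sq_nonneg _) D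
  calc (∑ k, hC.eigenvalues k ^ 2 * w k) ^ D
      = (∑ k, w k * z k) ^ D := by
        congr 1; exact Finset.sum_congr rfl (fun k _ => mul_comm _ _)
    _ ≤ ∑ k, w k * z k ^ D := key
    _ = ∑ k, hC.eigenvalues k ^ (2 * D) * w k := by
        refine Finset.sum_congr rfl (fun k _ => ?_)
        rw [hz, ← pow_mul, mul_comm (w k)]

/-- Nonnegativity of diagonal entries of C² for Hermitian C. -/
lemma sq_diag_nonneg (n : ℕ) (C : Matrix (Fin n) (Fin n) ℂ) (hC : C.IsHermitian) (j : Fin n) :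
    0 ≤ ((C ^ 2) j j).re := by
  rw [pow_diag_entry n C hC 2 j]
  exact Finset.sum_nonneg fun k _ => mul_nonneg (sq_nonneg _) (Complex.normSq_nonneg _)

/-- Power-mean inequality for finitely many nonnegative reals. -/
lemma pow_sum_le (ℓ : ℕ) (hℓ : 0 < ℓ) (a : Fin ℓ → ℝ) (ha : ∀ i, 0 ≤ a i) (D : ℕ) :
    (∑ i, a i) ^ D ≤ (ℓ : ℝ) ^ D * ((ℓ : ℝ)⁻¹ * ∑ i, a i ^ D) := by
  have hℓ' : (0 : ℝ) < ℓ := by exact_mod_cast hℓ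
  have key := Real.pow_arith_mean_le_arith_mean_pow Finset.univ (fun _ => (ℓ : ℝ)⁻¹) a
    (fun _ _ => by positivity)
    (by simp [Finset.sum_const]; field_simp) (fun i _ => ha i) D
  have h1 : ∑ i, (ℓ : ℝ)⁻¹ * a i = (ℓ : ℝ)⁻¹ * ∑ i, a i := by rw [Finset.mul_sum]
  have h2 : ∑ i, (ℓ : ℝ)⁻¹ * a i ^ D = (ℓ : ℝ)⁻¹ * ∑ i, a i ^ D := by rw [Finset.mul_sum]
  rw [h1, mul_pow, h2] at key
  calc (∑ i, a i) ^ D = (ℓ : ℝ) ^ D * (((ℓ : ℝ)⁻¹) ^ D * (∑ i, a i) ^ D) := by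
        rw [← mul_assoc, ← mul_pow]; field_simp; simp
    _ ≤ (ℓ : ℝ) ^ D * ((ℓ : ℝ)⁻¹ * ∑ i, a i ^ D) := by
        apply mul_le_mul_of_nonneg_left key (by positivity)

/-- For Hermitian X₁,…,X_ℓ and Z = ∑ᵢ Xᵢ², for every D ≥ 1,
Tr(Z^D) ≤ ℓ^D · maxᵢ Tr(Xᵢ^{2D}). -/
theorem stmt4 (N ℓ : ℕ) (hℓ : 0 < ℓ) (X : Fin ℓ → Matrix (Fin N) (Fin N) ℂ)
    (hX : ∀ i, (X i).IsHermitian) (D : ℕ) (hD : 1 ≤ D) :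
    (((∑ i, (X i) ^ 2) ^ D).trace).re ≤
      (ℓ : ℝ) ^ D * ⨆ i, (((X i) ^ (2 * D)).trace).re := by
  set Z : Matrix (Fin N) (Fin N) ℂ := ∑ i, (X i) ^ 2 with hZdef
  have hZ : Z.IsHermitian := by
    rw [Matrix.IsHermitian, hZdef, Matrix.conjTranspose_sum]
    exact Finset.sum_congr rfl fun i _ => (hX i).pow 2
  set U : Matrix.unitaryGroup (Fin N) ℂ := hZ.eigenvectorUnitary with hUdef
  set Uc : Matrix (Fin N) (Fin N) ℂ := (U : Matrix (Fin N) (Fin N) ℂ) with hUc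
  set lam : Fin N → ℝ := hZ.eigenvalues with hlam
  set C : Fin ℓ → Matrix (Fin N) (Fin N) ℂ := fun i => star Uc * X i * Uc with hCdef
  have hC : ∀ i, (C i).IsHermitian := by
    intro i
    rw [Matrix.IsHermitian, hCdef]
    simp only [Matrix.star_eq_conjTranspose, Matrix.conjTranspose_mul,
      Matrix.conjTranspose_conjTranspose, (hX i).eq, Matrix.mul_assoc]
  -- star Uc * Z * Uc = diagonal lam, and equals ∑ i, (C i)^2
  have hdiag : star Uc * Z * Uc = Matrix.diagonal (RCLike.ofReal ∘ lam) := by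
    have h := hZ.conjStarAlgAut_star_eigenvectorUnitary
    rw [Unitary.conjStarAlgAut_star_apply] at h
    exact h
  have hCsq : ∀ i (m : ℕ), star Uc * (X i) ^ m * Uc = (C i) ^ m := by
    intro i m
    rw [hCdef]
    exact (myConjPow' N U (X i) m).symm
  have hsum : star Uc * Z * Uc = ∑ i, (C i) ^ 2 := by
    rw [hZdef, Finset.mul_sum, Finset.sum_mul]
    exact Finset.sum_congr rfl fun i _ => hCsq i 2
  -- eigenvalues as sums of diagonal entries
  have hlam_eq : ∀ j, lam j = ∑ i, (((C i) ^ 2) j j).re := by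
    intro j
    have h := congrArg (fun M => (M j j).re) (hsum.symm.trans hdiag)
    simp only [Matrix.sum_apply, Complex.re_sum] at h
    rw [h]
    simp [Matrix.diagonal_apply_eq]
  -- trace of Z^D
  have htr : ((Z ^ D).trace).re = ∑ j, lam j ^ D := by
    have h : Z ^ D = Uc * (Matrix.diagonal (RCLike.ofReal ∘ lam)) ^ D * star Uc := by
      conv_lhs => rw [hZ.spectral_theorem, Unitary.conjStarAlgAut_apply]
      rw [myConjPow]
    rw [h, Matrix.trace_mul_cycle, hUc, Matrix.UnitaryGroup.star_mul_self, one_mul,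
      Matrix.diagonal_pow, Matrix.trace_diagonal, Complex.re_sum]
    refine Finset.sum_congr rfl fun j _ => ?_
    simp [Function.comp, ← Complex.ofReal_pow]
  -- per-i traces coincide
  have htri : ∀ i, (((C i) ^ (2 * D)).trace).re = (((X i) ^ (2 * D)).trace).re := by
    intro i
    rw [← hCsq i (2 * D), Matrix.trace_mul_cycle, hUc,
      Unitary.mul_star_self_of_mem U.2, one_mul]
  -- the sup
  set s : ℝ := ⨆ i, (((X i) ^ (2 * D)).trace).re with hs
  have hles : ∀ i, (((X i) ^ (2 * D)).trace).re ≤ s := fun i =>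
    le_ciSup (f := fun i => (((X i) ^ (2 * D)).trace).re)
      (Set.Finite.bddAbove (Set.finite_range _)) i
  -- main chain
  rw [htr]
  have step1 : ∀ j, lam j ^ D ≤
      (ℓ : ℝ) ^ D * ((ℓ : ℝ)⁻¹ * ∑ i, (((C i) ^ 2) j j).re ^ D) := by
    intro j
    rw [hlam_eq j]
    exact pow_sum_le ℓ hℓ _ (fun i => sq_diag_nonneg N (C i) (hC i) j) D
  have step2 : ∀ j i, (((C i) ^ 2) j j).re ^ D ≤ (((C i) ^ (2 * D)) j j).re :=
    fun j i => jensen_diag N (C i) (hC i) D j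
  calc ∑ j, lam j ^ D
      ≤ ∑ j, (ℓ : ℝ) ^ D * ((ℓ : ℝ)⁻¹ * ∑ i, (((C i) ^ 2) j j).re ^ D) :=
        Finset.sum_le_sum fun j _ => step1 j
    _ ≤ ∑ j, (ℓ : ℝ) ^ D * ((ℓ : ℝ)⁻¹ * ∑ i, (((C i) ^ (2 * D)) j j).re) := by
        refine Finset.sum_le_sum fun j _ => ?_
        refine mul_le_mul_of_nonneg_left (mul_le_mul_of_nonneg_left ?_ (by positivity))
          (by positivity)
        exact Finset.sum_le_sum fun i _ => step2 j i
    _ = (ℓ : ℝ) ^ D * ((ℓ : ℝ)⁻¹ * ∑ i, (((C i) ^ (2 * D)).trace).re) := by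
        rw [← Finset.mul_sum, ← Finset.mul_sum, Finset.sum_comm]
        congr 2
        refine Finset.sum_congr rfl fun i _ => ?_
        rw [Matrix.trace, Complex.re_sum]
        rfl
    _ ≤ (ℓ : ℝ) ^ D * s := by
        refine mul_le_mul_of_nonneg_left ?_ (by positivity)
        have : ∑ i, (((C i) ^ (2 * D)).trace).re ≤ (ℓ : ℝ) * s := by
          calc ∑ i, (((C i) ^ (2 * D)).trace).re = ∑ i, (((X i) ^ (2 * D)).trace).re :=
                Finset.sum_congr rfl fun i _ => htri i
            _ ≤ ∑ _i : Fin ℓ, s := Finset.sum_le_sum fun i _ => hles i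
            _ = (ℓ : ℝ) * s := by simp [Finset.sum_const, nsmul_eq_mul]
        have hℓ' : (0 : ℝ) < ℓ := by exact_mod_cast hℓ
        calc (ℓ : ℝ)⁻¹ * ∑ i, (((C i) ^ (2 * D)).trace).re
            ≤ (ℓ : ℝ)⁻¹ * ((ℓ : ℝ) * s) := by
              exact mul_le_mul_of_nonneg_left this (by positivity)
          _ = s := by field_simp
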